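/- Let n ≥ 1 be a natural number and δ ∈ (0,n). There exists a constant C > 0, depending only on n and δ, with the following property: for every continuous function f : (0,1] → ℝ satisfying |f(t)| ≤ t^δ for all t ∈ (0,1], there exists a twice continuously differentiable function u : (0,1] → ℝ such that u(1) = 0, −t²·u''(t) + (n−1)·t·u'(t) = f(t) for all t ∈ (0,1), and |u(t)| ≤ C·t^δ for all t ∈ (0,1]. -/

import Mathlib

open MeasureTheory intervalIntegral Set


/-- For any weight δ in the Fredholm window (0,n) there is a constant
C > 0, depending only on n and δ, such that for every continuous f on (0,1] with
|f(t)| ≤ t^δ there is a C² solution u of −t²u'' + (n−1)t u' = f on (0,1) with u(1) = 0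
and |u(t)| ≤ C·t^δ on (0,1]. -/
theorem stmt4 (n : ℕ) (hn : 1 ≤ n) (δ : ℝ) (hδ0 : 0 < δ) (hδn : δ < n) :
    ∃ C : ℝ, 0 < C ∧
      ∀ f : ℝ → ℝ, ContinuousOn f (Set.Ioc (0 : ℝ) 1) →
        (∀ t ∈ Set.Ioc (0 : ℝ) 1, |f t| ≤ t ^ δ) →
        ∃ u : ℝ → ℝ,
          ContDiffOn ℝ 2 u (Set.Ioc (0 : ℝ) 1) ∧
          u 1 = 0 ∧
          (∀ t ∈ Set.Ioo (0 : ℝ) 1,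
            -t ^ 2 * deriv (deriv u) t + ((n : ℝ) - 1) * t * deriv u t = f t) ∧
          (∀ t ∈ Set.Ioc (0 : ℝ) 1, |u t| ≤ C * t ^ δ) := by
  have hnδ : 0 < (n : ℝ) - δ := by linarith
  refine ⟨2 / (δ * ((n : ℝ) - δ)), div_pos two_pos (mul_pos hδ0 hnδ), ?_⟩
  intro f hf hfb
  -- extend f continuously to (0,∞)
  set fe : ℝ → ℝ := fun t => f (min t 1) with hfe_def
  have hfe : ∀ t ∈ Set.Ioc (0:ℝ) 1, fe t = f t := by
    intro t ht; simp [hfe_def, min_eq_left ht.2]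
  have hfec : ContinuousOn fe (Set.Ioi 0) := by
    apply hf.comp ((continuous_id.min continuous_const).continuousOn)
    intro t ht
    exact ⟨lt_min ht one_pos, min_le_right _ _⟩
  have hfeb : ∀ t ∈ Set.Ioc (0:ℝ) 1, |fe t| ≤ t ^ δ := by
    intro t ht; rw [hfe t ht]; exact hfb t ht
  -- g r = fe r / r^(n+1)
  set g : ℝ → ℝ := fun r => fe r / r ^ (n + 1) with hg_def
  have hgc : ContinuousOn g (Set.Ioi 0) :=
    hfec.div (continuous_pow _).continuousOn
      (fun r hr => pow_ne_zero _ (ne_of_gt hr))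
  have hgb : ∀ r ∈ Set.Ioc (0:ℝ) 1, |g r| ≤ r ^ (δ - n - 1) := by
    intro r hr
    have hr0 : (0:ℝ) < r := hr.1
    have h1 : |g r| = |fe r| / r ^ (n + 1) := by
      rw [hg_def]; rw [abs_div, abs_of_pos (pow_pos hr0 _)]
    rw [h1]
    have h2 : |fe r| / r ^ (n + 1) ≤ r ^ δ / r ^ (n + 1) := by
      exact div_le_div_of_nonneg_right (hfeb r hr) (pow_pos hr0 _).le
    refine h2.trans (le_of_eq ?_)
    rw [← Real.rpow_natCast r (n + 1), ← Real.rpow_sub hr0]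
    congr 1
    push_cast; ring
  -- F t = ∫_t^1 g
  set F : ℝ → ℝ := fun t => ∫ r in t..1, g r with hF_def
  have hgi : ∀ t : ℝ, 0 < t → IntervalIntegrable g volume t 1 := by
    intro t ht
    apply ContinuousOn.intervalIntegrable
    apply hgc.mono
    intro x hx
    exact lt_of_lt_of_le (lt_min ht one_pos) hx.1
  have hFd : ∀ t ∈ Set.Ioi (0:ℝ), HasDerivAt F (-(g t)) t := by
    intro t ht
    exact intervalIntegral.integral_hasDerivAt_left (hgi t ht)
      (hgc.stronglyMeasurableAtFilter isOpen_Ioi t ht)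
      (hgc.continuousAt (isOpen_Ioi.mem_nhds ht))
  have hFc : ContinuousOn F (Set.Ioi 0) :=
    fun t ht => ((hFd t ht).continuousAt).continuousWithinAt
  -- bound on F
  have hFb : ∀ t ∈ Set.Ioc (0:ℝ) 1, |F t| ≤ t ^ (δ - n) / ((n : ℝ) - δ) := by
    intro t ht
    have ht0 : (0:ℝ) < t := ht.1
    have hsub : Set.Icc t 1 ⊆ Set.Ioc (0:ℝ) 1 := fun r hr => ⟨lt_of_lt_of_le ht0 hr.1, hr.2⟩
    have hbi : IntervalIntegrable (fun r : ℝ => r ^ (δ - n - 1)) volume t 1 := by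
      apply ContinuousOn.intervalIntegrable
      apply ContinuousOn.rpow_const continuousOn_id
      intro x hx
      rw [Set.uIcc_of_le ht.2] at hx
      exact Or.inl (ne_of_gt (lt_of_lt_of_le ht0 hx.1))
    have hI : (∫ r in t..1, r ^ (δ - n - 1)) = (t ^ (δ - n) - 1) / ((n : ℝ) - δ) := by
      rw [integral_rpow (Or.inr ⟨by intro hc; apply ne_of_lt hnδ; linarith, by
        rw [Set.uIcc_of_le ht.2]; intro hc; exact absurd hc.1 (not_le.2 ht0)⟩)]
      have e : δ - (n:ℝ) - 1 + 1 = δ - n := by ring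
      rw [e, Real.one_rpow]
      rw [div_eq_div_iff (by linarith) (by linarith)]
      ring
    have habs : |F t| ≤ (t ^ (δ - n) - 1) / ((n : ℝ) - δ) := by
      rw [← hI, hF_def]
      refine abs_le.2 ⟨?_, ?_⟩
      · rw [← intervalIntegral.integral_neg]
        apply intervalIntegral.integral_mono_on ht.2 hbi.neg (hgi t ht0)
        intro r hr
        simpa using (abs_le.1 (hgb r (hsub hr))).1
      · apply intervalIntegral.integral_mono_on ht.2 (hgi t ht0) hbi
        intro r hr
        exact (abs_le.1 (hgb r (hsub hr))).2
    refine habs.trans (div_le_div_of_nonneg_right (by linarith) hnδ.le)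
  -- h s = s^(n-1) * F s
  set h : ℝ → ℝ := fun s => s ^ (n - 1) * F s with hh_def
  have hhc : ContinuousOn h (Set.Ioi 0) := ((continuous_pow _).continuousOn).mul hFc
  have hcast : ((n - 1 : ℕ) : ℝ) = (n : ℝ) - 1 := by
    rw [Nat.cast_sub hn, Nat.cast_one]
  have hhb : ∀ s ∈ Set.Ioc (0:ℝ) 1, |h s| ≤ s ^ (δ - 1) / ((n : ℝ) - δ) := by
    intro s hs
    have hs0 : (0:ℝ) < s := hs.1
    have h1 : |h s| = s ^ (n - 1) * |F s| := by
      rw [hh_def, abs_mul, abs_of_pos (pow_pos hs0 _)]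
    rw [h1]
    have h2 : s ^ (n - 1) * |F s| ≤ s ^ (n - 1) * (s ^ (δ - n) / ((n:ℝ) - δ)) :=
      mul_le_mul_of_nonneg_left (hFb s hs) (le_of_lt (pow_pos hs0 _))
    refine h2.trans (le_of_eq ?_)
    rw [← Real.rpow_natCast s (n - 1), hcast, ← mul_div_assoc, ← Real.rpow_add hs0]
    have e : (n:ℝ) - 1 + (δ - n) = δ - 1 := by ring
    rw [e]
  -- integrability of h on (0,1]
  set bfun : ℝ → ℝ := fun s => s ^ (δ - 1) / ((n : ℝ) - δ) with hbfun_def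
  have hbfi : ∀ t : ℝ, t ≤ 1 → IntegrableOn bfun (Set.Ioc 0 t) := by
    intro t htle
    rcases le_or_gt t 0 with h0 | h0
    · rw [Set.Ioc_eq_empty (by exact fun hc => absurd (lt_of_le_of_lt h0 hc) (lt_irrefl t))]
      exact integrableOn_empty
    · have : IntervalIntegrable bfun volume 0 t := by
        apply IntervalIntegrable.div_const
        exact intervalIntegrable_rpow' (by linarith)
      exact (intervalIntegrable_iff_integrableOn_Ioc_of_le (le_of_lt h0)).mp this
  have hInt : IntegrableOn h (Set.Ioc 0 1) := by
    apply Integrable.mono' (hbfi 1 le_rfl)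
    · exact ((hhc.mono (fun x hx => hx.1)).aestronglyMeasurable measurableSet_Ioc)
    · rw [ae_restrict_iff' measurableSet_Ioc]
      exact ae_of_all _ (fun s hs => by rw [Real.norm_eq_abs]; exact hhb s hs)
  set L : ℝ := ∫ s in Set.Ioc (0:ℝ) 1, h s with hL_def
  -- computation of the integral of bfun
  have hcalc : ∀ t : ℝ, 0 < t → t ≤ 1 →
      (∫ s in Set.Ioc (0:ℝ) t, bfun s) = t ^ δ / (δ * ((n:ℝ) - δ)) := by
    intro t ht0 ht1
    rw [← intervalIntegral.integral_of_le (le_of_lt ht0), hbfun_def]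
    simp only []
    rw [intervalIntegral.integral_div]
    rw [integral_rpow (Or.inl (by linarith))]
    have e : δ - 1 + 1 = δ := by ring
    rw [e, Real.zero_rpow (ne_of_gt hδ0)]
    rw [div_div]
    ring_nf
  have hIocb : ∀ t : ℝ, 0 < t → t ≤ 1 →
      |∫ s in Set.Ioc (0:ℝ) t, h s| ≤ t ^ δ / (δ * ((n:ℝ) - δ)) := by
    intro t ht0 ht1
    rw [← Real.norm_eq_abs, ← hcalc t ht0 ht1]
    apply MeasureTheory.norm_integral_le_of_norm_le (hbfi t ht1)
    rw [ae_restrict_iff' measurableSet_Ioc]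
    refine ae_of_all _ (fun s hs => ?_)
    rw [Real.norm_eq_abs]
    exact hhb s ⟨hs.1, hs.2.trans ht1⟩
  have hLb : |L| ≤ 1 / (δ * ((n:ℝ) - δ)) := by
    have := hIocb 1 one_pos le_rfl
    rwa [Real.one_rpow] at this
  -- the solution
  set u : ℝ → ℝ := fun t => -(∫ s in t..1, h s) + L * (1 - t ^ n) with hu_def
  have hhi : ∀ t : ℝ, 0 < t → IntervalIntegrable h volume t 1 := by
    intro t ht
    apply ContinuousOn.intervalIntegrable
    apply hhc.mono
    intro x hx
    exact lt_of_lt_of_le (lt_min ht one_pos) hx.1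
  have hud : ∀ t ∈ Set.Ioi (0:ℝ), HasDerivAt u ((F t - n * L) * t ^ (n - 1)) t := by
    intro t ht
    have h1 : HasDerivAt (fun x => ∫ s in x..1, h s) (-(h t)) t :=
      intervalIntegral.integral_hasDerivAt_left (hhi t ht)
        (hhc.stronglyMeasurableAtFilter isOpen_Ioi t ht)
        (hhc.continuousAt (isOpen_Ioi.mem_nhds ht))
    have h2 : HasDerivAt (fun x : ℝ => L * (1 - x ^ n))
        (L * (0 - n * t ^ (n - 1))) t := by
      exact ((hasDerivAt_const t (1:ℝ)).sub (hasDerivAt_pow n t)).const_mul L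
    have h3 := h1.neg.add h2
    exact h3.congr_deriv (by rw [hh_def]; ring)
  have hu1d : ∀ t ∈ Set.Ioi (0:ℝ),
      HasDerivAt (fun x => (F x - n * L) * x ^ (n - 1))
        (-(g t) * t ^ (n - 1) + (F t - n * L) * (((n - 1 : ℕ) : ℝ) * t ^ (n - 1 - 1))) t := by
    intro t ht
    exact ((hFd t ht).sub_const _).mul (hasDerivAt_pow (n - 1) t)
  have hdu : Set.EqOn (deriv u) (fun t => (F t - n * L) * t ^ (n - 1)) (Set.Ioi 0) :=
    fun t ht => (hud t ht).deriv
  have hu2c : ContinuousOn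
      (fun t => -(g t) * t ^ (n - 1) + (F t - n * L) * (((n - 1 : ℕ) : ℝ) * t ^ (n - 1 - 1)))
      (Set.Ioi 0) := by
    apply ContinuousOn.add
    · exact hgc.neg.mul (continuous_pow _).continuousOn
    · exact (hFc.sub continuousOn_const).mul
        (continuousOn_const.mul (continuous_pow _).continuousOn)
  refine ⟨u, ?_, ?_, ?_, ?_⟩
  · -- ContDiffOn
    apply ContDiffOn.mono (s := Set.Ioi 0) ?_ (fun x hx => hx.1)
    rw [show (2 : WithTop ℕ∞) = 1 + 1 from rfl,
      contDiffOn_succ_iff_deriv_of_isOpen isOpen_Ioi]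
    refine ⟨fun t ht => (hud t ht).differentiableAt.differentiableWithinAt, by simp, ?_⟩
    apply ContDiffOn.congr (f := fun t => (F t - n * L) * t ^ (n - 1)) ?_ hdu
    rw [show (1 : WithTop ℕ∞) = 0 + 1 from rfl,
      contDiffOn_succ_iff_deriv_of_isOpen isOpen_Ioi]
    refine ⟨fun t ht => (hu1d t ht).differentiableAt.differentiableWithinAt, by simp, ?_⟩
    rw [contDiffOn_zero]
    exact hu2c.congr (fun t ht => (hu1d t ht).deriv)
  · -- u 1 = 0
    simp [hu_def]
  · -- the ODE
    intro t ht
    have ht0 : (0:ℝ) < t := ht.1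
    have htIoi : t ∈ Set.Ioi (0:ℝ) := ht0
    have e1 : deriv u t = (F t - n * L) * t ^ (n - 1) := (hud t htIoi).deriv
    have e2 : deriv (deriv u) t
        = -(g t) * t ^ (n - 1) + (F t - n * L) * (((n - 1 : ℕ) : ℝ) * t ^ (n - 1 - 1)) := by
      have heq : deriv u =ᶠ[nhds t] (fun x => (F x - n * L) * x ^ (n - 1)) :=
        Filter.eventuallyEq_of_mem (isOpen_Ioi.mem_nhds htIoi) hdu
      rw [heq.deriv_eq]
      exact (hu1d t htIoi).deriv
    rw [e1, e2]
    have k1 : t ^ 2 * t ^ (n - 1) = t ^ (n + 1) := by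
      rw [← pow_add]; congr 1; omega
    have k2 : t ^ 2 * (((n - 1 : ℕ) : ℝ) * t ^ (n - 1 - 1)) = ((n:ℝ) - 1) * (t * t ^ (n - 1)) := by
      obtain ⟨m, rfl⟩ : ∃ m, n = m + 1 := ⟨n - 1, by omega⟩
      simp only [Nat.add_sub_cancel]
      rcases m with _ | k
      · simp
      · simp only [Nat.add_sub_cancel]
        push_cast
        ring
    have hgt : t ^ (n + 1) * g t = f t := by
      rw [hg_def]
      simp only []
      rw [mul_div_assoc']
      rw [mul_comm, mul_div_assoc, div_self (pow_ne_zero _ (ne_of_gt ht0)), mul_one]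
      exact hfe t ⟨ht0, le_of_lt ht.2⟩
    rw [← hgt]
    linear_combination g t * k1 - (F t - n * L) * k2
  · -- the bound
    intro t ht
    have ht0 : (0:ℝ) < t := ht.1
    have hsplit : u t = (∫ s in Set.Ioc (0:ℝ) t, h s) - L * t ^ n := by
      have e1 : (∫ s in t..1, h s) = ∫ s in Set.Ioc t 1, h s :=
        intervalIntegral.integral_of_le ht.2
      have e2 : L = (∫ s in Set.Ioc (0:ℝ) t, h s) + ∫ s in Set.Ioc t 1, h s := by
        rw [hL_def, ← Set.Ioc_union_Ioc_eq_Ioc (le_of_lt ht0) ht.2]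
        exact setIntegral_union (Set.Ioc_disjoint_Ioc_of_le le_rfl) measurableSet_Ioc
          (hInt.mono_set (fun x hx => ⟨hx.1, hx.2.trans ht.2⟩))
          (hInt.mono_set (fun x hx => ⟨lt_of_lt_of_le ht0 (le_of_lt hx.1), hx.2⟩))
      rw [hu_def]
      simp only []
      rw [e1, e2]
      ring
    rw [hsplit]
    have b1 := hIocb t ht0 ht.2
    have b2 : |L * t ^ n| ≤ t ^ δ / (δ * ((n:ℝ) - δ)) := by
      rw [abs_mul, abs_of_pos (pow_pos ht0 _)]
      have htn : (t : ℝ) ^ n ≤ t ^ δ := by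
        rw [← Real.rpow_natCast t n]
        exact Real.rpow_le_rpow_of_exponent_ge ht0 ht.2 (le_of_lt hδn)
      calc |L| * t ^ n ≤ (1 / (δ * ((n:ℝ) - δ))) * t ^ δ := by
            apply mul_le_mul hLb htn (le_of_lt (pow_pos ht0 _))
            positivity
        _ = t ^ δ / (δ * ((n:ℝ) - δ)) := by ring
    calc |(∫ s in Set.Ioc (0:ℝ) t, h s) - L * t ^ n|
        ≤ |∫ s in Set.Ioc (0:ℝ) t, h s| + |L * t ^ n| := abs_sub _ _
      _ ≤ t ^ δ / (δ * ((n:ℝ) - δ)) + t ^ δ / (δ * ((n:ℝ) - δ)) := add_le_add b1 b2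
      _ = 2 / (δ * ((n:ℝ) - δ)) * t ^ δ := by ring
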